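/- Let R be a ring and M a finitely generated R-module admitting a finite free resolution 0 → F_k → ⋯ → F_0 → M → 0 by finite free modules. Then M lies in the smallest strictly full triangulated subcategory of the derived category D^b(Mod_R) containing R (closed under shifts, isomorphisms, and cones of distinguished triangles). In particular, for R a polynomial ring, R generates D^b of finitely generated R-modules. -/

import Mathlib

open CategoryTheory CategoryTheory.Limits CategoryTheory.Pretriangulated

universe w u

namespace Aux12

variable {R : Type u} [Ring R] [HasDerivedCategory.{w} (ModuleCat.{u} R)]
  {P : DerivedCategory (ModuleCat.{u} R) → Prop}

/-- From a distinguished triangle, `P` of the two outer objects gives `P` of the middle. -/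
lemma mid
    (hP_shift : ∀ X (n : ℤ), P X → P (X⟦n⟧))
    (hP_cone : ∀ T ∈ distTriang (DerivedCategory (ModuleCat.{u} R)),
      P T.obj₁ → P T.obj₂ → P T.obj₃)
    (T : Triangle (DerivedCategory (ModuleCat.{u} R)))
    (hT : T ∈ distTriang (DerivedCategory (ModuleCat.{u} R)))
    (h1 : P T.obj₁) (h3 : P T.obj₃) : P T.obj₂ :=
  hP_cone _ (inv_rot_of_distTriang T hT) (hP_shift _ _ h3) h1

lemma pzero
    (hP_iso : ∀ {X Y : DerivedCategory (ModuleCat.{u} R)}, (X ≅ Y) → P X → P Y)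
    (hP_cone : ∀ T ∈ distTriang (DerivedCategory (ModuleCat.{u} R)),
      P T.obj₁ → P T.obj₂ → P T.obj₃)
    (hR : P ((DerivedCategory.singleFunctor (ModuleCat.{u} R) 0).obj (ModuleCat.of R R)))
    (X : DerivedCategory (ModuleCat.{u} R)) (hX : IsZero X) : P X := by
  have h0 := hP_cone _ (contractible_distinguished
    ((DerivedCategory.singleFunctor (ModuleCat.{u} R) 0).obj (ModuleCat.of R R))) hR hR
  exact hP_iso ((isZero_zero _).iso hX) h0

/-- `P` holds for the single object associated to `R^m`. -/
lemma pfin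
    (hP_iso : ∀ {X Y : DerivedCategory (ModuleCat.{u} R)}, (X ≅ Y) → P X → P Y)
    (hP_shift : ∀ X (n : ℤ), P X → P (X⟦n⟧))
    (hP_cone : ∀ T ∈ distTriang (DerivedCategory (ModuleCat.{u} R)),
      P T.obj₁ → P T.obj₂ → P T.obj₃)
    (hR : P ((DerivedCategory.singleFunctor (ModuleCat.{u} R) 0).obj (ModuleCat.of R R)))
    (m : ℕ) :
    P ((DerivedCategory.singleFunctor (ModuleCat.{u} R) 0).obj (ModuleCat.of R (Fin m → R))) := by
  induction m with
  | zero =>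
      exact pzero hP_iso hP_cone hR _
        ((DerivedCategory.singleFunctor (ModuleCat.{u} R) 0).map_isZero
          (ModuleCat.isZero_of_subsingleton _))
  | succ m ih =>
      -- short exact sequence 0 → R → R^{m+1} → R^m → 0
      let S : ShortComplex (ModuleCat.{u} R) := ShortComplex.mk
        (ModuleCat.ofHom (LinearMap.single R (fun _ : Fin (m + 1) => R) (Fin.last m)))
        (ModuleCat.ofHom (LinearMap.funLeft R R (Fin.castSucc : Fin m → Fin (m + 1))))
        (by
          ext x
          simp [LinearMap.funLeft_apply, (Fin.castSucc_lt_last x).ne, Pi.single_apply]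
          rfl)
      have hS : S.ShortExact := by
        refine ShortComplex.ShortExact.mk' ?_ ?_ ?_
        · rw [ShortComplex.moduleCat_exact_iff]
          intro v hv
          refine ⟨v (Fin.last m), ?_⟩
          funext j
          have hv' := congrFun hv
          refine Fin.lastCases ?_ ?_ j
          · simp [S]
          · intro i
            have h2 : v i.castSucc = 0 := by
              exact hv' i
            simp [S, Pi.single_apply, (Fin.castSucc_lt_last i).ne, h2]
        · rw [ModuleCat.mono_iff_injective]
          intro a b hab
          simpa [S] using congrFun hab (Fin.last m)
        · rw [ModuleCat.epi_iff_surjective]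
          intro w
          refine ⟨Fin.snoc w 0, ?_⟩
          funext j
          simp only [S, ModuleCat.ofHom, LinearMap.funLeft_apply]
          exact Fin.snoc_castSucc (α := fun _ : Fin (m + 1) => R) (x := 0) (p := w) (i := j)
      exact mid hP_shift hP_cone _ hS.singleTriangle_distinguished hR ih

/-- `P` holds for the single object associated to any finite free module. -/
lemma pfree
    (hP_iso : ∀ {X Y : DerivedCategory (ModuleCat.{u} R)}, (X ≅ Y) → P X → P Y)
    (hP_shift : ∀ X (n : ℤ), P X → P (X⟦n⟧))
    (hP_cone : ∀ T ∈ distTriang (DerivedCategory (ModuleCat.{u} R)),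
      P T.obj₁ → P T.obj₂ → P T.obj₃)
    (hR : P ((DerivedCategory.singleFunctor (ModuleCat.{u} R) 0).obj (ModuleCat.of R R)))
    (N : ModuleCat.{u} R) [Module.Free R N] [Module.Finite R N] :
    P ((DerivedCategory.singleFunctor (ModuleCat.{u} R) 0).obj N) := by
  let b := Module.Free.chooseBasis R N
  let e : (Fin (Fintype.card (Module.Free.ChooseBasisIndex R N)) → R) ≃ₗ[R] N :=
    ((b.reindex (Fintype.equivFin _)).equivFun).symm
  exact hP_iso ((DerivedCategory.singleFunctor (ModuleCat.{u} R) 0).mapIso e.toModuleIso)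
    (pfin hP_iso hP_shift hP_cone hR _)

/-- The main induction on the length of the resolution. -/
lemma key
    (hP_iso : ∀ {X Y : DerivedCategory (ModuleCat.{u} R)}, (X ≅ Y) → P X → P Y)
    (hP_shift : ∀ X (n : ℤ), P X → P (X⟦n⟧))
    (hP_cone : ∀ T ∈ distTriang (DerivedCategory (ModuleCat.{u} R)),
      P T.obj₁ → P T.obj₂ → P T.obj₃)
    (hR : P ((DerivedCategory.singleFunctor (ModuleCat.{u} R) 0).obj (ModuleCat.of R R)))
    (k : ℕ) :
    ∀ (M : ModuleCat.{u} R) (F : ChainComplex (ModuleCat.{u} R) ℕ),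
      (∀ n, Module.Free R (F.X n)) → (∀ n, Module.Finite R (F.X n)) →
      (∀ n, k < n → IsZero (F.X n)) →
      ∀ (π : F ⟶ (ChainComplex.single₀ (ModuleCat.{u} R)).obj M), QuasiIso π →
      P ((DerivedCategory.singleFunctor (ModuleCat.{u} R) 0).obj M) := by
  induction k with
  | zero =>
      intro M F hfree hfin hbdd π hπ
      haveI := hπ
      let Pres : ProjectiveResolution M :=
        { complex := F
          projective := fun n => letI := hfree n
            ModuleCat.projective_of_free (Module.Free.chooseBasis R (F.X n))
          π := π
          quasiIso := hπ }
      have hexact := Pres.exact₀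
      rw [ShortComplex.moduleCat_exact_iff] at hexact
      have hz : F.d 1 0 = 0 := (hbdd 1 (by omega)).eq_of_src _ _
      have hinj : Function.Injective (Pres.π.f 0) := by
        intro a b hab
        have h0 : Pres.π.f 0 (a - b) = 0 := by rw [map_sub, hab, sub_self]
        obtain ⟨y, hy⟩ := hexact _ h0
        have h2 : F.d 1 0 y = a - b := hy
        rw [hz] at h2
        have h3 : a - b = 0 := by simpa using h2.symm
        rw [sub_eq_zero] at h3
        exact h3
      haveI : Mono (Pres.π.f 0) := (ModuleCat.mono_iff_injective _).2 hinj
      haveI : Epi (Pres.π.f 0) := epi_of_isColimit_cofork Pres.isColimitCokernelCofork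
      haveI : IsIso (Pres.π.f 0) := isIso_of_mono_of_epi _
      haveI := hfree 0
      haveI := hfin 0
      exact hP_iso ((DerivedCategory.singleFunctor (ModuleCat.{u} R) 0).mapIso
        (asIso (Pres.π.f 0) ≪≫ HomologicalComplex.singleObjXSelf (ComplexShape.down ℕ) 0 M))
        (pfree hP_iso hP_shift hP_cone hR (F.X 0))
  | succ k ih =>
      intro M F hfree hfin hbdd π hπ
      haveI := hπ
      let Pres : ProjectiveResolution M :=
        { complex := F
          projective := fun n => letI := hfree n
            ModuleCat.projective_of_free (Module.Free.chooseBasis R (F.X n))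
          π := π
          quasiIso := hπ }
      have hexact0 := Pres.exact₀
      rw [ShortComplex.moduleCat_exact_iff] at hexact0
      have hexs : ∀ n, ∀ x : F.X (n + 1), F.d (n + 1) n x = 0 →
          ∃ y : F.X (n + 2), F.d (n + 2) (n + 1) y = x := fun n =>
        (ShortComplex.moduleCat_exact_iff _).1 (Pres.exact_succ n)
      -- the kernel of `F.X 0 → M`, i.e. the range of `F.d 1 0`
      let Nsub : Submodule R (F.X 0) := LinearMap.range (F.d 1 0).hom
      let N : ModuleCat.{u} R := ModuleCat.of R Nsub
      haveI : Module.Finite R (F.X 1) := hfin 1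
      haveI hNfin : Module.Finite R N := Module.Finite.range (F.d 1 0).hom
      -- the shifted complex
      let G : ChainComplex (ModuleCat.{u} R) ℕ :=
        { X := fun n => F.X (n + 1)
          d := fun i j => F.d (i + 1) (j + 1)
          shape := fun i j h => F.shape (i + 1) (j + 1)
            (by simp only [ComplexShape.down_Rel] at h ⊢; omega)
          d_comp_d' := fun i j l _ _ => F.d_comp_d _ _ _ }
      have hdd : ∀ x : F.X 2, F.d 1 0 (F.d 2 1 x) = 0 := fun x => by
        have h : (F.d 2 1 ≫ F.d 1 0) x = 0 := by rw [F.d_comp_d]; rfl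
        exact h
      let g0 : G.X 0 ⟶ N := ModuleCat.ofHom (F.d 1 0).hom.rangeRestrict
      have hg0 : G.d 1 0 ≫ g0 = 0 := by
        ext x
        show F.d 1 0 (F.d 2 1 x) = 0
        exact hdd x
      let π' : G ⟶ (ChainComplex.single₀ (ModuleCat.{u} R)).obj N :=
        (ChainComplex.toSingle₀Equiv G N).symm ⟨g0, hg0⟩
      have hτ : π'.f 0 = g0 :=
        ChainComplex.toSingle₀Equiv_symm_apply_f_zero g0 hg0
      haveI hπ' : QuasiIso π' := by
        constructor
        intro n
        match n with
        | 0 =>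
          rw [ChainComplex.quasiIsoAt₀_iff, ShortComplex.quasiIso_iff_of_zeros']
          · have hg0' : F.d 2 1 ≫ g0 = 0 := hg0
            refine (ShortComplex.exact_and_epi_g_iff_of_iso
              (S₂ := ShortComplex.mk (F.d 2 1) g0 hg0')
              (ShortComplex.isoMk (Iso.refl _) (Iso.refl _) (Iso.refl _) ?_ ?_)).2
              ⟨?_, ?_⟩
            · simp
            · simp
            · rw [ShortComplex.moduleCat_exact_iff]
              intro x hx
              have hx' : F.d 1 0 x = 0 := congrArg Subtype.val hx
              exact hexs 0 x hx'
            · exact (ModuleCat.epi_iff_surjective _).2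
                (LinearMap.surjective_rangeRestrict _)
          · exact F.shape 1 1 (by simp)
          · rfl
          · rfl
        | (n + 1) =>
          rw [quasiIsoAt_iff_exactAt' π' (n + 1)
            (ChainComplex.exactAt_succ_single_obj _ _)]
          have hFe := Pres.complex_exactAt_succ (n + 1)
          rw [HomologicalComplex.exactAt_iff' _ (n + 3) (n + 2) (n + 1)
            (by simp) (by simp)] at hFe
          rw [HomologicalComplex.exactAt_iff' _ (n + 2) (n + 1) n (by simp) (by simp)]
          exact hFe
      have hPN := ih N G (fun n => hfree (n + 1)) (fun n => hfin (n + 1))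
        (fun n hn => hbdd (n + 1) (by omega)) π' hπ'
      -- the short exact sequence 0 → N → F.X 0 → M' → 0
      have hdπ := Pres.complex_d_comp_π_f_zero
      let S : ShortComplex (ModuleCat.{u} R) := ShortComplex.mk
        (show N ⟶ F.X 0 from ModuleCat.ofHom Nsub.subtype) (Pres.π.f 0)
        (by
          ext x
          obtain ⟨x, y, rfl⟩ := x
          have h := congrArg (fun (φ : F.X 1 ⟶ _) => φ y) hdπ
          exact h)
      have hS : S.ShortExact := by
        refine ShortComplex.ShortExact.mk' ?_ ?_ ?_
        · rw [ShortComplex.moduleCat_exact_iff]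
          intro x hx
          obtain ⟨y, hy⟩ := hexact0 x hx
          exact ⟨⟨x, ⟨y, hy⟩⟩, rfl⟩
        · exact (ModuleCat.mono_iff_injective _).2 Subtype.val_injective
        · exact epi_of_isColimit_cofork Pres.isColimitCokernelCofork
      haveI := hfree 0
      haveI := hfin 0
      have h3 := hP_cone _ hS.singleTriangle_distinguished hPN
        (pfree hP_iso hP_shift hP_cone hR (F.X 0))
      exact hP_iso ((DerivedCategory.singleFunctor (ModuleCat.{u} R) 0).mapIso
        (HomologicalComplex.singleObjXSelf (ComplexShape.down ℕ) 0 M)) h3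

end Aux12

/-- Let `R` be a ring and `M` a finitely generated `R`-module admitting a
finite free resolution `0 → F_k → ⋯ → F_0 → M → 0` by finite free modules. Then `M`
(viewed as a complex concentrated in degree 0) lies in the smallest strictly full
triangulated subcategory of the derived category of `Mod_R` containing `R` (closed under
isomorphisms, shifts, and cones of distinguished triangles); thus `R` generates the
derived category. -/
theorem mem_triangulated_closure_of_ring_of_finite_free_resolution
    {R : Type u} [Ring R] [HasDerivedCategory.{w} (ModuleCat.{u} R)]
    (M : ModuleCat.{u} R) [Module.Finite R M]
    (k : ℕ) (F : ChainComplex (ModuleCat.{u} R) ℕ)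
    (hfree : ∀ n, Module.Free R (F.X n)) (hfin : ∀ n, Module.Finite R (F.X n))
    (hbdd : ∀ n, k < n → IsZero (F.X n))
    (π : F ⟶ (ChainComplex.single₀ (ModuleCat.{u} R)).obj M) [QuasiIso π]
    (P : DerivedCategory (ModuleCat.{u} R) → Prop)
    (hP_iso : ∀ {X Y}, (X ≅ Y) → P X → P Y)
    (hP_shift : ∀ X (n : ℤ), P X → P (X⟦n⟧))
    (hP_cone : ∀ T ∈ distTriang (DerivedCategory (ModuleCat.{u} R)),
      P T.obj₁ → P T.obj₂ → P T.obj₃)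
    (hR : P ((DerivedCategory.singleFunctor (ModuleCat.{u} R) 0).obj (ModuleCat.of R R))) :
    P ((DerivedCategory.singleFunctor (ModuleCat.{u} R) 0).obj M) :=
  Aux12.key hP_iso hP_shift hP_cone hR k M F hfree hfin hbdd π inferInstance
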